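/- arXiv:1003.2556 — 2 statements merged into one kernel-verified Lean document; each statement's English description precedes it below -/
import Mathlib

section
/- For every k ∈ {1,...,n} and every x ∈ [0,1]^n, the k-th order statistic satisfies x_{(k)} = ∑_{S ⊆ {1,...,n}, |S| ≥ n−k+1} (−1)^{|S|−n+k−1} · binom(|S|−1, n−k) · min_{i∈S} x_i. -/
open MeasureTheory Finset

/-- The `k`-th order statistic of `x : Fin n → ℝ`, with conventions
`oStat x 0 = 0` and `oStat x k = 1` for `k > n`. For `1 ≤ k ≤ n` it is the
`k`-th smallest coordinate of `x`. -/
noncomputable def oStat {n : ℕ} (x : Fin n → ℝ) (k : ℕ) : ℝ :=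
  if k = 0 then 0
  else if k ≤ n then ((Finset.univ.val.map x).sort (· ≤ ·)).getD (k - 1) 0
  else 1

/-- The `k`-th order statistic of the subfamily `(x i)_{i ∈ S}`. -/
noncomputable def oStatS {n : ℕ} (S : Finset (Fin n)) (x : Fin n → ℝ) (k : ℕ) : ℝ :=
  ((S.val.map x).sort (· ≤ ·)).getD (k - 1) 0

lemma altsum (M : ℕ) : ∑ u ∈ range (M+1), (-1:ℝ)^u * (M.choose u) = if M = 0 then 1 else 0 := by
  have h := congrArg (fun z : ℤ => (z : ℝ)) (Int.alternating_sum_range_choose (n := M))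
  push_cast [apply_ite (fun z : ℤ => (z : ℝ))] at h
  exact h

lemma lemL (m r : ℕ) : ∑ t ∈ range (m+1), (-1:ℝ)^(t - r) * (m.choose t) * (t.choose r)
    = if m = r then 1 else 0 := by
  rcases lt_or_ge m r with hmr | hrm
  · rw [if_neg (by omega)]
    apply Finset.sum_eq_zero
    intro t ht
    rw [mem_range] at ht
    rw [Nat.choose_eq_zero_of_lt (show t < r by omega)]
    simp
  · have h0 : ∀ t ∈ range (m+1), t ∉ Ico r (m+1) →
        (-1:ℝ)^(t - r) * (m.choose t) * (t.choose r) = 0 := by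
      intro t ht ht'
      rw [mem_range] at ht
      rw [mem_Ico] at ht'
      rw [Nat.choose_eq_zero_of_lt (show t < r by omega)]
      simp
    rw [← Finset.sum_subset (fun t ht => by rw [mem_Ico] at ht; rw [mem_range]; omega) h0, Finset.sum_Ico_eq_sum_range]
    have hcc : ∀ u ∈ range (m + 1 - r), (-1:ℝ)^(r + u - r) * (m.choose (r+u)) * ((r+u).choose r)
        = (m.choose r) * ((-1:ℝ)^u * ((m-r).choose u)) := by
      intro u hu
      rw [mem_range] at hu
      have h1 : m.choose (r+u) * (r+u).choose r = m.choose r * (m-r).choose u := by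
        have := Nat.choose_mul (n := m) (k := r+u) (s := r) (by omega)
        simpa using this
      have h2 : ((m.choose (r+u) : ℝ) * ((r+u).choose r)) = (m.choose r) * ((m-r).choose u) := by
        exact_mod_cast congrArg (fun z : ℕ => (z : ℝ)) h1
      calc (-1:ℝ)^(r+u-r) * (m.choose (r+u)) * ((r+u).choose r)
          = ((m.choose (r+u):ℝ) * ((r+u).choose r)) * (-1)^u := by
            rw [Nat.add_sub_cancel_left]; ring
        _ = ((m.choose r :ℝ) * ((m-r).choose u)) * (-1)^u := by rw [h2]
        _ = _ := by ring
    rw [Finset.sum_congr rfl hcc, ← Finset.mul_sum]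
    have hmr1 : m + 1 - r = (m - r) + 1 := by omega
    rw [hmr1, altsum]
    rcases eq_or_ne m r with rfl | hne
    · simp
    · rw [if_neg (by omega), if_neg hne, mul_zero]

lemma oStatS_eq_inf' {n : ℕ} (S : Finset (Fin n)) (hS : S.Nonempty) (x : Fin n → ℝ) :
    oStatS S x 1 = S.inf' hS x := by
  unfold oStatS
  set l := (S.val.map x).sort (· ≤ ·) with hl
  have hsorted : l.Pairwise (· ≤ ·) := Multiset.pairwise_sort _ _
  have hmem : ∀ a, a ∈ l ↔ a ∈ S.val.map x := fun a => by rw [hl]; exact Multiset.mem_sort _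
  have hlen : l.length = S.card := by
    rw [hl, Multiset.length_sort, Multiset.card_map]; rfl
  have hne : l ≠ [] := by
    intro h; rw [h] at hlen; simp at hlen; exact hS.ne_empty (Finset.card_eq_zero.mp hlen.symm)
  obtain ⟨a, t, hat⟩ := List.exists_cons_of_ne_nil hne
  rw [hat]
  show a = S.inf' hS x
  apply le_antisymm
  · apply Finset.le_inf'
    intro i hi
    have hxi : x i ∈ l := (hmem _).2 (Multiset.mem_map_of_mem _ hi)
    rw [hat] at hxi
    rcases List.mem_cons.mp hxi with h | h
    · exact h.ge
    · exact (List.pairwise_cons.mp (hat ▸ hsorted)).1 _ h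
  · have ha : a ∈ S.val.map x := (hmem a).1 (hat ▸ List.mem_cons_self (a := a) (l := t))
    obtain ⟨i, hi, hxi⟩ := Multiset.mem_map.mp ha
    exact hxi ▸ Finset.inf'_le x hi

lemma oStat_monotone {n k : ℕ} (hk : 1 ≤ k) (hkn : k ≤ n) (y : Fin n → ℝ) (hy : Monotone y) :
    oStat y k = y ⟨k - 1, by omega⟩ := by
  unfold oStat
  rw [if_neg (by omega), if_pos hkn]
  have h1 : (Finset.univ.val.map y : Multiset ℝ) = (List.ofFn y : Multiset ℝ) := by
    rw [List.ofFn_eq_map]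
    rfl
  have hsort : (Finset.univ.val.map y).sort (· ≤ ·) = List.ofFn y := by
    refine List.Perm.eq_of_pairwise' (Multiset.pairwise_sort _ _) (List.pairwise_ofFn.mpr (fun i j h => hy h.le)) ?_
    exact Multiset.coe_eq_coe.mp (by rw [Multiset.sort_eq, h1])
  rw [hsort]
  have hlt : k - 1 < (List.ofFn y).length := by rw [List.length_ofFn]; omega
  rw [List.getD_eq_getElem _ _ hlt, List.getElem_ofFn]

lemma key {n k : ℕ} (hk : 1 ≤ k) (hkn : k ≤ n) (y : Fin n → ℝ) (hy : Monotone y) :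
    oStat y k = ∑ S ∈ Finset.univ.powerset.filter
        (fun S : Finset (Fin n) => n - k + 1 ≤ S.card),
      (-1 : ℝ) ^ (S.card - (n - k + 1)) * (Nat.choose (S.card - 1) (n - k) : ℝ) *
        oStatS S y 1 := by
  rw [oStat_monotone hk hkn y hy]
  symm
  have step1 : ∑ S ∈ Finset.univ.powerset.filter
        (fun S : Finset (Fin n) => n - k + 1 ≤ S.card),
      (-1 : ℝ) ^ (S.card - (n - k + 1)) * (Nat.choose (S.card - 1) (n - k) : ℝ) *
        oStatS S y 1
      = ∑ S ∈ Finset.univ.powerset.filter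
        (fun S : Finset (Fin n) => n - k + 1 ≤ S.card),
      (-1 : ℝ) ^ (S.card - (n - k + 1)) * (Nat.choose (S.card - 1) (n - k) : ℝ) *
        (if h : S.Nonempty then y (S.min' h) else 0) := by
    refine Finset.sum_congr rfl fun S hS => ?_
    have hcard := (Finset.mem_filter.mp hS).2
    have hne : S.Nonempty := Finset.card_pos.mp (by omega)
    rw [dif_pos hne, oStatS_eq_inf' S hne y]
    congr 1
    exact le_antisymm (Finset.inf'_le _ (S.min'_mem hne))
      (Finset.le_inf' _ _ fun i hi => hy (S.min'_le i hi))
  rw [step1]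
  -- bijection with sigma type
  have step2 : ∑ S ∈ Finset.univ.powerset.filter
        (fun S : Finset (Fin n) => n - k + 1 ≤ S.card),
      (-1 : ℝ) ^ (S.card - (n - k + 1)) * (Nat.choose (S.card - 1) (n - k) : ℝ) *
        (if h : S.Nonempty then y (S.min' h) else 0)
      = ∑ p ∈ (Finset.univ.sigma fun i : Fin n =>
          (Finset.Ioi i).powerset.filter fun T => n - k ≤ T.card),
        (-1 : ℝ) ^ (p.2.card - (n - k)) * (Nat.choose p.2.card (n - k) : ℝ) * y p.1 := by
    refine Finset.sum_bij'
      (fun S hS => ⟨S.min' (Finset.card_pos.mp (by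
          have := (Finset.mem_filter.mp hS).2; omega)),
        S.erase (S.min' (Finset.card_pos.mp (by
          have := (Finset.mem_filter.mp hS).2; omega)))⟩)
      (fun p _ => insert p.1 p.2) ?_ ?_ ?_ ?_ ?_
    · intro S hS
      have hcard := (Finset.mem_filter.mp hS).2
      have hne : S.Nonempty := Finset.card_pos.mp (by omega)
      rw [Finset.mem_sigma]
      refine ⟨Finset.mem_univ _, ?_⟩
      rw [Finset.mem_filter, Finset.mem_powerset]
      constructor
      · intro i hi
        rw [Finset.mem_erase] at hi
        rw [Finset.mem_Ioi]
        exact lt_of_le_of_ne (S.min'_le i hi.2) (Ne.symm hi.1)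
      · rw [Finset.card_erase_of_mem (S.min'_mem hne)]
        omega
    · intro p hp
      rw [Finset.mem_sigma, Finset.mem_filter, Finset.mem_powerset] at hp
      obtain ⟨-, hsub, hcard⟩ := hp
      have hnotmem : p.1 ∉ p.2 := fun h => lt_irrefl _ (Finset.mem_Ioi.mp (hsub h))
      rw [Finset.mem_filter, Finset.mem_powerset]
      refine ⟨Finset.subset_univ _, ?_⟩
      rw [Finset.card_insert_of_notMem hnotmem]
      omega
    · intro S hS
      have hcard := (Finset.mem_filter.mp hS).2
      have hne : S.Nonempty := Finset.card_pos.mp (by omega)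
      exact Finset.insert_erase (S.min'_mem hne)
    · intro p hp
      rw [Finset.mem_sigma, Finset.mem_filter, Finset.mem_powerset] at hp
      obtain ⟨-, hsub, hcard⟩ := hp
      have hnotmem : p.1 ∉ p.2 := fun h => lt_irrefl _ (Finset.mem_Ioi.mp (hsub h))
      have hmin : (insert p.1 p.2).min' (Finset.insert_nonempty _ _) = p.1 := by
        apply le_antisymm
        · exact Finset.min'_le _ _ (Finset.mem_insert_self _ _)
        · apply Finset.le_min'
          intro i hi
          rcases Finset.mem_insert.mp hi with rfl | hi
          · exact le_rfl
          · exact (Finset.mem_Ioi.mp (hsub hi)).le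
      refine Sigma.ext hmin (heq_of_eq ?_)
      show (insert p.1 p.2).erase _ = p.2
      rw [hmin, Finset.erase_insert hnotmem]
    · intro S hS
      have hcard := (Finset.mem_filter.mp hS).2
      have hne : S.Nonempty := Finset.card_pos.mp (by omega)
      have hce : (S.erase (S.min' hne)).card = S.card - 1 :=
        Finset.card_erase_of_mem (S.min'_mem hne)
      rw [dif_pos hne]
      show _ = _ * _ * y (S.min' hne)
      simp only [hce]
      have he : S.card - (n - k + 1) = S.card - 1 - (n - k) := by omega
      rw [he]
  rw [step2, Finset.sum_sigma]
  have step4 : ∀ i : Fin n, ∑ T ∈ (Finset.Ioi i).powerset.filter (fun T => n - k ≤ T.card),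
      (-1 : ℝ) ^ (T.card - (n - k)) * (Nat.choose T.card (n - k) : ℝ) * y i
      = ∑ T ∈ (Finset.Ioi i).powerset,
      (-1 : ℝ) ^ (T.card - (n - k)) * (Nat.choose T.card (n - k) : ℝ) * y i := by
    intro i
    apply Finset.sum_filter_of_ne
    intro T hT hne
    by_contra h
    push_neg at h
    rw [Nat.choose_eq_zero_of_lt h] at hne
    simp at hne
  have step5 : ∀ i : Fin n, ∑ T ∈ (Finset.Ioi i).powerset,
      (-1 : ℝ) ^ (T.card - (n - k)) * (Nat.choose T.card (n - k) : ℝ) * y i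
      = (if n - 1 - (i : ℕ) = n - k then 1 else 0) * y i := by
    intro i
    rw [Finset.sum_powerset_apply_card
      (fun t => (-1 : ℝ) ^ (t - (n - k)) * (Nat.choose t (n - k) : ℝ) * y i)]
    rw [Fin.card_Ioi]
    rw [← lemL (n - 1 - (i : ℕ)) (n - k), Finset.sum_mul]
    refine Finset.sum_congr rfl fun t _ => ?_
    rw [nsmul_eq_mul]
    ring
  calc ∑ i : Fin n, ∑ T ∈ (Finset.Ioi i).powerset.filter (fun T => n - k ≤ T.card),
      (-1 : ℝ) ^ (T.card - (n - k)) * (Nat.choose T.card (n - k) : ℝ) * y i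
      = ∑ i : Fin n, (if n - 1 - (i : ℕ) = n - k then 1 else 0) * y i := by
        refine Finset.sum_congr rfl fun i _ => ?_
        rw [step4 i, step5 i]
    _ = ∑ i : Fin n, (if i = (⟨k - 1, by omega⟩ : Fin n) then y i else 0) := by
        refine Finset.sum_congr rfl fun i _ => ?_
        by_cases h : (i : ℕ) = k - 1
        · rw [if_pos (by omega), if_pos (Fin.ext h), one_mul]
        · rw [if_neg (fun hc => h (by omega)), if_neg (fun hc => h (by
            rw [hc])), zero_mul]
    _ = y ⟨k - 1, by omega⟩ := by
        rw [Finset.sum_ite_eq' Finset.univ _ y, if_pos (Finset.mem_univ _)]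

theorem stmt5 (n k : ℕ) (hk : 1 ≤ k) (hkn : k ≤ n)
    (x : Fin n → ℝ) (hx : x ∈ Set.Icc (0 : Fin n → ℝ) 1) :
    oStat x k = ∑ S ∈ Finset.univ.powerset.filter
        (fun S : Finset (Fin n) => n - k + 1 ≤ S.card),
      (-1 : ℝ) ^ (S.card - (n - k + 1)) * (Nat.choose (S.card - 1) (n - k) : ℝ) *
        oStatS S x 1 := by
  set σ := Tuple.sort x with hσ
  set y := x ∘ σ with hy
  have hmono : Monotone y := Tuple.monotone_sort x
  have huniv : (Finset.univ.val.map (⇑σ) : Multiset (Fin n)) = Finset.univ.val := by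
    have := congrArg Finset.val (Finset.map_univ_equiv σ)
    simpa using this
  have hmul : ∀ S : Finset (Fin n), (S.map σ.toEmbedding).val.map x = S.val.map y := by
    intro S
    rw [Finset.map_val, Multiset.map_map]
    rfl
  have hcomp1 : ∀ S : Finset (Fin n), (S.map σ.toEmbedding).map σ.symm.toEmbedding = S := by
    intro S; ext i; simp
  have hcomp2 : ∀ S : Finset (Fin n), (S.map σ.symm.toEmbedding).map σ.toEmbedding = S := by
    intro S; ext i; simp
  have hx0 : oStat x k = oStat y k := by
    unfold oStat
    rw [if_neg (show ¬ k = 0 by omega), if_neg (show ¬ k = 0 by omega), if_pos hkn, if_pos hkn]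
    congr 1
    congr 1
    rw [hy]
    show Finset.univ.val.map x = Finset.univ.val.map (x ∘ ⇑σ)
    conv_lhs => rw [← huniv]
    rw [Multiset.map_map]
  rw [hx0, key hk hkn y hmono]
  symm
  refine Finset.sum_bij' (fun S _ => S.map σ.symm.toEmbedding)
    (fun S _ => S.map σ.toEmbedding) ?_ ?_ ?_ ?_ ?_
  · intro S hS
    rw [Finset.mem_filter] at hS ⊢
    exact ⟨Finset.mem_powerset.mpr (Finset.subset_univ _), by rw [Finset.card_map]; exact hS.2⟩
  · intro S hS
    rw [Finset.mem_filter] at hS ⊢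
    exact ⟨Finset.mem_powerset.mpr (Finset.subset_univ _), by rw [Finset.card_map]; exact hS.2⟩
  · intro S hS
    exact hcomp2 S
  · intro S hS
    exact hcomp1 S
  · intro S hS
    rw [Finset.card_map]
    congr 1
    unfold oStatS
    rw [← hmul (S.map σ.symm.toEmbedding), hcomp2 S]
end

section
/- For every square integrable f : [0,1]^n → ℝ and every k ∈ {1,...,n}, ∫_{[0,1]^n} f(x) · x_{(k)} dx = ∑_{S ⊆ {1,...,n}, |S| < k} ∫_0^1 ( ∫_{A_{S,y}} f(x) dx ) dy, where A_{S,y} = {x ∈ [0,1]^n : x_i ≤ y for i ∈ S and x_i ≥ y for i ∉ S}. -/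
open MeasureTheory Finset

lemma sorted_lt_iff_countP {l : List ℝ} (hs : l.Pairwise (· ≤ ·)) {k : ℕ} (hk : 1 ≤ k)
    (hkl : k ≤ l.length) (y : ℝ) :
    y < l[k-1]'(by omega) ↔ l.countP (fun a => decide (a ≤ y)) < k := by
  constructor
  · intro h
    have hsplit : l.countP (fun a => decide (a ≤ y)) =
        (l.take (k-1)).countP (fun a => decide (a ≤ y)) +
        (l.drop (k-1)).countP (fun a => decide (a ≤ y)) := by
      conv_lhs => rw [← List.take_append_drop (k-1) l]
      rw [List.countP_append]
    have hdrop : (l.drop (k-1)).countP (fun a => decide (a ≤ y)) = 0 := by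
      rw [List.countP_eq_zero]
      intro a ha
      obtain ⟨j, hj, rfl⟩ := List.mem_iff_getElem.1 ha
      rw [List.length_drop] at hj
      rw [List.getElem_drop]
      have hle : l[k-1]'(by omega) ≤ l[k-1+j]'(by omega) := by
        have := hs.rel_get_of_le (a := ⟨k-1, by omega⟩)
          (b := ⟨k-1+j, by omega⟩) (by simp)
        simpa [List.get_eq_getElem] using this
      simp only [decide_eq_true_eq]
      intro hc
      exact absurd (lt_of_lt_of_le h hle) (not_lt.2 hc)
    have htake : (l.take (k-1)).countP (fun a => decide (a ≤ y)) ≤ k - 1 := by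
      calc _ ≤ (l.take (k-1)).length := List.countP_le_length
        _ ≤ k - 1 := by rw [List.length_take]; omega
    omega
  · intro h
    by_contra hc
    push_neg at hc
    have : (l.take k).countP (fun a => decide (a ≤ y)) = (l.take k).length := by
      rw [List.countP_eq_length]
      intro a ha
      obtain ⟨j, hj, rfl⟩ := List.mem_iff_getElem.1 ha
      rw [List.length_take] at hj
      have hjl : j < l.length := by omega
      rw [List.getElem_take]
      have hle : l[j] ≤ l[k-1]'(by omega) := by
        have := hs.rel_get_of_le (a := ⟨j, hjl⟩) (b := ⟨k-1, by omega⟩) (by simp; omega)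
        simpa [List.get_eq_getElem] using this
      simpa using le_trans hle hc
    have hlen : (l.take k).length = k := by rw [List.length_take]; omega
    have hge : k ≤ l.countP (fun a => decide (a ≤ y)) := by
      conv_rhs => rw [← List.take_append_drop k l]
      rw [List.countP_append, this, hlen]
      omega
    omega


lemma oStat_lt_iff {n k : ℕ} (hk : 1 ≤ k) (hkn : k ≤ n) (x : Fin n → ℝ) (y : ℝ) :
    y < oStat x k ↔ (Finset.univ.filter (fun i => x i ≤ y)).card < k := by
  set l := ((Finset.univ.val.map x).sort (· ≤ ·)) with hl
  have hlen : l.length = n := by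
    simp [hl]
  have hsort : l.Pairwise (· ≤ ·) := Multiset.pairwise_sort _ _
  have hget : oStat x k = l[k-1]'(by omega) := by
    rw [oStat, if_neg (by omega), if_pos hkn, ← hl,
      List.getD_eq_getElem _ _ (by simp only [hlen]; omega)]
  rw [hget, sorted_lt_iff_countP hsort hk (by omega)]
  have hcount : l.countP (fun a => decide (a ≤ y)) =
      (Finset.univ.filter (fun i => x i ≤ y)).card := by
    have : l.countP (fun a => decide (a ≤ y)) =
        Multiset.countP (fun a => a ≤ y) (Multiset.map x Finset.univ.val) := by
      rw [hl]
      rw [← Multiset.coe_countP]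
      congr 1
      exact Multiset.sort_eq _ _
    rw [this, Multiset.countP_map]
    rfl
  rw [hcount]

lemma hyperplane_null (n : ℕ) (i : Fin n) (y : ℝ) :
    volume {x : Fin n → ℝ | x i = y} = 0 := by
  have h : {x : Fin n → ℝ | x i = y} =
      Set.pi Set.univ (fun j => if j = i then {y} else Set.univ) := by
    ext x
    simp only [Set.mem_setOf_eq, Set.mem_pi, Set.mem_univ, forall_true_left]
    constructor
    · intro h j
      by_cases hj : j = i
      · subst hj; simp [h]
      · simp [hj]
    · intro h
      have := h i
      simpa using this
  rw [h, volume_pi_pi]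
  exact Finset.prod_eq_zero (Finset.mem_univ i) (by simp)


lemma oStat_mem_Icc {n k : ℕ} (hk : 1 ≤ k) (hkn : k ≤ n) {x : Fin n → ℝ}
    (hx : x ∈ Set.Icc (0 : Fin n → ℝ) 1) : oStat x k ∈ Set.Icc (0:ℝ) 1 := by
  set l := ((Finset.univ.val.map x).sort (· ≤ ·)) with hl
  have hlen : l.length = n := by simp [hl]
  have hget : oStat x k = l[k-1]'(by omega) := by
    rw [oStat, if_neg (by omega), if_pos hkn, ← hl,
      List.getD_eq_getElem _ _ (by simp only [hlen]; omega)]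
  have hmem : l[k-1]'(by omega) ∈ l := List.getElem_mem _
  have : l[k-1]'(by omega) ∈ Multiset.map x Finset.univ.val := by
    rw [← Multiset.sort_eq (Multiset.map x Finset.univ.val) (· ≤ ·)]
    exact_mod_cast hmem
  obtain ⟨i, _, hi⟩ := Multiset.mem_map.1 this
  rw [hget, ← hi]
  exact ⟨hx.1 i, hx.2 i⟩

theorem stmt6 (n k : ℕ) (hk : 1 ≤ k) (hkn : k ≤ n) (f : (Fin n → ℝ) → ℝ)
    (hf : MemLp f 2 (volume.restrict (Set.Icc (0 : Fin n → ℝ) 1))) :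
    (∫ x in Set.Icc (0 : Fin n → ℝ) 1, f x * oStat x k) =
      ∑ S ∈ Finset.univ.powerset.filter (fun S : Finset (Fin n) => S.card < k),
        ∫ y in Set.Icc (0 : ℝ) 1,
          ∫ x in {x : Fin n → ℝ | x ∈ Set.Icc (0 : Fin n → ℝ) 1 ∧
            (∀ i ∈ S, x i ≤ y) ∧ (∀ i ∉ S, y ≤ x i)}, f x := by
  set ν : Measure (Fin n → ℝ) := volume.restrict (Set.Icc (0 : Fin n → ℝ) 1) with hν
  set μ : Measure ℝ := volume.restrict (Set.Icc (0 : ℝ) 1) with hμ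
  haveI hνfin : IsFiniteMeasure ν := by
    constructor
    rw [hν, Measure.restrict_apply_univ]
    exact (isCompact_Icc).measure_lt_top
  haveI hμprob : IsProbabilityMeasure μ := by
    constructor
    rw [hμ, Measure.restrict_apply_univ, Real.volume_Icc]
    norm_num
  have hfi : Integrable f ν := hf.integrable one_le_two
  -- the function on the product
  set g : ℝ × (Fin n → ℝ) → ℝ := fun p => f p.2 with hg
  have hgi : Integrable g (μ.prod ν) := by
    have hmap : Measure.map Prod.snd (μ.prod ν) = ν := by
      rw [Measure.map_snd_prod, measure_univ, one_smul]
    have := (integrable_map_measure (by rw [hmap]; exact hfi.1)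
      measurable_snd.aemeasurable).mp (by rw [hmap]; exact hfi)
    exact this
  -- the family of sets
  set 𝒮 : Finset (Finset (Fin n)) :=
    Finset.univ.powerset.filter (fun S : Finset (Fin n) => S.card < k) with h𝒮
  set B : Finset (Fin n) → Set (ℝ × (Fin n → ℝ)) := fun S =>
    {p | p.2 ∈ Set.Icc (0 : Fin n → ℝ) 1 ∧ (∀ i ∈ S, p.2 i ≤ p.1) ∧
      (∀ i ∉ S, p.1 < p.2 i)} with hB
  have hBmeas : ∀ S, MeasurableSet (B S) := by
    intro S
    have hrw : B S = (Prod.snd ⁻¹' Set.Icc (0 : Fin n → ℝ) 1) ∩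
        ((⋂ i ∈ S, {p : ℝ × (Fin n → ℝ) | p.2 i ≤ p.1}) ∩
         (⋂ i ∈ Sᶜ, {p : ℝ × (Fin n → ℝ) | p.1 < p.2 i})) := by
      ext p
      simp only [hB, Set.mem_setOf_eq, Set.mem_inter_iff, Set.mem_preimage,
        Set.mem_iInter, Finset.mem_compl]
    rw [hrw]
    refine (measurable_snd measurableSet_Icc).inter (MeasurableSet.inter ?_ ?_)
    · refine MeasurableSet.biInter (Set.to_countable _) fun i _ => ?_
      exact measurableSet_le (measurable_snd.eval) measurable_fst
    · refine MeasurableSet.biInter (Set.to_countable _) fun i _ => ?_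
      exact measurableSet_lt measurable_fst (measurable_snd.eval)
  set U : Set (ℝ × (Fin n → ℝ)) := ⋃ S ∈ 𝒮, B S with hU
  have hUmeas : MeasurableSet U := by
    exact MeasurableSet.biUnion (Set.to_countable _) fun S _ => hBmeas S
  have hUeq : U = {p : ℝ × (Fin n → ℝ) | p.2 ∈ Set.Icc (0 : Fin n → ℝ) 1 ∧
      p.1 < oStat p.2 k} := by
    ext p
    simp only [hU, Set.mem_iUnion, Set.mem_setOf_eq, h𝒮, Finset.mem_filter,
      Finset.mem_powerset, hB, exists_prop]
    constructor
    · rintro ⟨S, ⟨-, hcard⟩, hIcc, h1, h2⟩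
      refine ⟨hIcc, (oStat_lt_iff hk hkn _ _).2 ?_⟩
      calc (Finset.univ.filter (fun i => p.2 i ≤ p.1)).card
          ≤ S.card := by
            apply Finset.card_le_card
            intro i hi
            rw [Finset.mem_filter] at hi
            by_contra hiS
            exact absurd hi.2 (not_le.2 (h2 i hiS))
        _ < k := hcard
    · rintro ⟨hIcc, hlt⟩
      refine ⟨Finset.univ.filter (fun i => p.2 i ≤ p.1),
        ⟨Finset.subset_univ _, (oStat_lt_iff hk hkn _ _).1 hlt⟩, hIcc, ?_, ?_⟩
      · intro i hi; exact (Finset.mem_filter.1 hi).2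
      · intro i hi
        rw [Finset.mem_filter] at hi
        push_neg at hi
        exact hi (Finset.mem_univ i)
  -- sum of indicators equals indicator of union
  have hsum : ∀ p, ∑ S ∈ 𝒮, (B S).indicator g p = U.indicator g p := by
    intro p
    by_cases hp : p ∈ U
    · rw [Set.indicator_of_mem hp]
      obtain ⟨S₀, hS₀m, hpS₀⟩ := Set.mem_iUnion₂.1 hp
      have huniq : ∀ S, p ∈ B S → S = S₀ := by
        intro S hS
        have h1 := hS.2.1
        have h2 := hS.2.2
        have h1' := hpS₀.2.1
        have h2' := hpS₀.2.2
        ext i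
        constructor
        · intro hi
          by_contra hi'
          exact absurd (h1 i hi) (not_le.2 (h2' i hi'))
        · intro hi
          by_contra hi'
          exact absurd (h1' i hi) (not_le.2 (h2 i hi'))
      rw [Finset.sum_eq_single S₀]
      · rw [Set.indicator_of_mem hpS₀]
      · intro S hS hne
        rw [Set.indicator_of_notMem]
        intro hpB
        exact hne (huniq S hpB)
      · intro h
        exact absurd hS₀m h
    · rw [Set.indicator_of_notMem hp]
      apply Finset.sum_eq_zero
      intro S hS
      rw [Set.indicator_of_notMem]
      intro h
      exact hp (Set.mem_iUnion₂.2 ⟨S, hS, h⟩)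
  -- integrability of pieces
  have hBint : ∀ S, Integrable ((B S).indicator g) (μ.prod ν) :=
    fun S => hgi.indicator (hBmeas S)
  have hUint : Integrable (U.indicator g) (μ.prod ν) := hgi.indicator hUmeas
  -- LHS
  have hLHS : (∫ x in Set.Icc (0 : Fin n → ℝ) 1, f x * oStat x k) =
      ∫ p, U.indicator g p ∂(μ.prod ν) := by
    rw [integral_prod_symm _ hUint]
    apply integral_congr_ae
    filter_upwards [ae_restrict_mem measurableSet_Icc] with x hx
    have hc := oStat_mem_Icc hk hkn hx
    set c := oStat x k with hcdef
    have hinner : (fun y => U.indicator g (y, x)) =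
        fun y => (Set.Iio c).indicator (fun _ => f x) y := by
      funext y
      by_cases hy : y < c
      · have h1 : (y, x) ∈ U := by rw [hUeq]; exact ⟨hx, hy⟩
        rw [Set.indicator_of_mem h1, Set.indicator_of_mem (show y ∈ Set.Iio c from hy)]
      · have h1 : (y, x) ∉ U := by
          rw [hUeq]
          simp only [Set.mem_setOf_eq]
          exact fun h => hy h.2
        have h2 : y ∉ Set.Iio c := by simpa using hy
        rw [Set.indicator_of_notMem h1, Set.indicator_of_notMem h2]
    rw [hinner, integral_indicator measurableSet_Iio, setIntegral_const,
      show μ = volume.restrict (Set.Icc (0:ℝ) 1) from rfl,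
      measureReal_restrict_apply measurableSet_Iio]
    have hIio : Set.Iio c ∩ Set.Icc (0:ℝ) 1 = Set.Ico 0 c := by
      ext z
      simp only [Set.mem_inter_iff, Set.mem_Iio, Set.mem_Icc, Set.mem_Ico]
      constructor
      · rintro ⟨h1, h2, h3⟩; exact ⟨h2, h1⟩
      · rintro ⟨h1, h2⟩; exact ⟨h2, h1, le_trans (le_of_lt h2) hc.2⟩
    rw [hIio, Real.volume_real_Ico_of_le hc.1, sub_zero, smul_eq_mul,
      mul_comm]
  -- RHS term S
  have hRHS : ∀ S ∈ 𝒮,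
      (∫ y in Set.Icc (0 : ℝ) 1,
        ∫ x in {x : Fin n → ℝ | x ∈ Set.Icc (0 : Fin n → ℝ) 1 ∧
          (∀ i ∈ S, x i ≤ y) ∧ (∀ i ∉ S, y ≤ x i)}, f x) =
      ∫ p, (B S).indicator g p ∂(μ.prod ν) := by
    intro S hS
    rw [integral_prod _ (hBint S)]
    apply integral_congr_ae
    filter_upwards with y
    -- inner integral over x
    set A' : Set (Fin n → ℝ) := {x | x ∈ Set.Icc (0 : Fin n → ℝ) 1 ∧
      (∀ i ∈ S, x i ≤ y) ∧ (∀ i ∉ S, y < x i)} with hA'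
    have hA'meas : MeasurableSet A' := by
      have hrw : A' = Set.Icc (0 : Fin n → ℝ) 1 ∩
          ((⋂ i ∈ S, {x : Fin n → ℝ | x i ≤ y}) ∩
           (⋂ i ∈ Sᶜ, {x : Fin n → ℝ | y < x i})) := by
        ext x
        simp only [hA', Set.mem_setOf_eq, Set.mem_inter_iff, Set.mem_iInter,
          Finset.mem_compl]
      rw [hrw]
      refine measurableSet_Icc.inter (MeasurableSet.inter ?_ ?_)
      · refine MeasurableSet.biInter (Set.to_countable _) fun i _ => ?_
        exact measurableSet_le (measurable_pi_apply i) measurable_const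
      · refine MeasurableSet.biInter (Set.to_countable _) fun i _ => ?_
        exact measurableSet_lt measurable_const (measurable_pi_apply i)
    have hindic : (fun x => (B S).indicator g (y, x)) = A'.indicator f := by
      funext x
      by_cases hx : x ∈ A'
      · rw [Set.indicator_of_mem hx,
          Set.indicator_of_mem (show (y, x) ∈ B S from ⟨hx.1, hx.2.1, hx.2.2⟩)]
      · rw [Set.indicator_of_notMem hx, Set.indicator_of_notMem]
        intro h
        exact hx ⟨h.1, h.2.1, h.2.2⟩
    rw [hindic, integral_indicator hA'meas,
      show ν = volume.restrict (Set.Icc (0 : Fin n → ℝ) 1) from rfl,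
      Measure.restrict_restrict hA'meas]
    have hsub : A' ∩ Set.Icc (0 : Fin n → ℝ) 1 = A' := by
      apply Set.inter_eq_self_of_subset_left
      intro x hx; exact hx.1
    rw [hsub]
    apply setIntegral_congr_set
    -- A =ᵐ A'
    rw [MeasureTheory.ae_eq_set]
    constructor
    · refine measure_mono_null ?_
        (measure_iUnion_null fun i => hyperplane_null n i y)
      intro x hx
      simp only [Set.mem_diff, Set.mem_setOf_eq, hA'] at hx
      obtain ⟨⟨hIcc, h1, h2⟩, hnot⟩ := hx
      push_neg at hnot
      obtain ⟨i, hiS, hile⟩ := hnot hIcc h1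
      exact Set.mem_iUnion.2 ⟨i, le_antisymm hile (h2 i hiS)⟩
    · have hsub2 : A' \ {x : Fin n → ℝ | x ∈ Set.Icc (0 : Fin n → ℝ) 1 ∧
          (∀ i ∈ S, x i ≤ y) ∧ (∀ i ∉ S, y ≤ x i)} = ∅ := by
        rw [Set.diff_eq_empty]
        exact fun x hx => ⟨hx.1, hx.2.1, fun i hi => le_of_lt (hx.2.2 i hi)⟩
      rw [hsub2]
      exact measure_empty
  -- put it together
  calc (∫ x in Set.Icc (0 : Fin n → ℝ) 1, f x * oStat x k)
      = ∫ p, U.indicator g p ∂(μ.prod ν) := hLHS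
    _ = ∫ p, ∑ S ∈ 𝒮, (B S).indicator g p ∂(μ.prod ν) := by
        apply integral_congr_ae
        filter_upwards with p
        exact (hsum p).symm
    _ = ∑ S ∈ 𝒮, ∫ p, (B S).indicator g p ∂(μ.prod ν) :=
        integral_finset_sum _ fun S _ => hBint S
    _ = _ := Finset.sum_congr rfl fun S hS => (hRHS S hS).symm
end
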